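/- Let T : Sⁿ → Sⁿ be defined by T(A) = tr(A)·eeᵀ, where e ∈ ℝⁿ is the all-ones vector. Then T is rank-one non-increasing (rank(A) = 1 implies rank(T(A)) ≤ 1), its Moore–Penrose inverse is T†(A) = (1/n³)(eᵀAe)·I, and T† is not rank-one non-increasing (for n ≥ 2). -/

import Mathlib

open Matrix

/-- The space `Sⁿ` of real symmetric `n × n` matrices. -/
def symMat (n : ℕ) : Submodule ℝ (Matrix (Fin n) (Fin n) ℝ) where
  carrier := {A | A.IsSymm}
  add_mem' := fun ha hb => ha.add hb
  zero_mem' := by simp [Matrix.IsSymm]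
  smul_mem' := fun c A hA => by
    simp only [Set.mem_setOf_eq, Matrix.IsSymm, Matrix.transpose_smul] at *
    rw [hA]

theorem stmt12 {n : ℕ} (hn : 2 ≤ n) (T Td : symMat n →ₗ[ℝ] symMat n)
    (hT : ∀ A : symMat n, ((T A : symMat n) : Matrix (Fin n) (Fin n) ℝ)
      = Matrix.trace (A : Matrix (Fin n) (Fin n) ℝ)
          • Matrix.vecMulVec (fun _ => (1:ℝ)) (fun _ => (1:ℝ)))
    (hTd : ∀ A : symMat n, ((Td A : symMat n) : Matrix (Fin n) (Fin n) ℝ)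
      = ((1 / (n:ℝ)^3) *
          ((fun _ => (1:ℝ)) ⬝ᵥ (A : Matrix (Fin n) (Fin n) ℝ).mulVec (fun _ => (1:ℝ))))
        • (1 : Matrix (Fin n) (Fin n) ℝ)) :
    (∀ A : symMat n, (A : Matrix (Fin n) (Fin n) ℝ).rank = 1 →
        ((T A : symMat n) : Matrix (Fin n) (Fin n) ℝ).rank ≤ 1) ∧
    T ∘ₗ Td ∘ₗ T = T ∧
    Td ∘ₗ T ∘ₗ Td = Td ∧
    (∀ A B : symMat n,
      Matrix.trace (((T (Td A) : symMat n) : Matrix (Fin n) (Fin n) ℝ) * (B : Matrix (Fin n) (Fin n) ℝ))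
        = Matrix.trace ((A : Matrix (Fin n) (Fin n) ℝ) * ((T (Td B) : symMat n) : Matrix (Fin n) (Fin n) ℝ))) ∧
    (∀ A B : symMat n,
      Matrix.trace (((Td (T A) : symMat n) : Matrix (Fin n) (Fin n) ℝ) * (B : Matrix (Fin n) (Fin n) ℝ))
        = Matrix.trace ((A : Matrix (Fin n) (Fin n) ℝ) * ((Td (T B) : symMat n) : Matrix (Fin n) (Fin n) ℝ))) ∧
    ¬ (∀ A : symMat n, (A : Matrix (Fin n) (Fin n) ℝ).rank = 1 →
        ((Td A : symMat n) : Matrix (Fin n) (Fin n) ℝ).rank ≤ 1) := by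
  have hnz : NeZero n := ⟨by omega⟩
  have hn0 : (n : ℝ) ≠ 0 := Nat.cast_ne_zero.mpr (by omega)
  set e : Fin n → ℝ := fun _ => (1:ℝ) with he
  set J : Matrix (Fin n) (Fin n) ℝ := Matrix.vecMulVec e e with hJ
  -- basic computations
  have heJe : e ⬝ᵥ J.mulVec e = (n:ℝ)^2 := by
    simp [hJ, he, Matrix.vecMulVec, Matrix.mulVec, dotProduct, Finset.sum_const,
      Finset.card_univ]
    ring
  have heIe : ∀ c : ℝ, e ⬝ᵥ ((c • (1 : Matrix (Fin n) (Fin n) ℝ)).mulVec e) = c * n := by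
    intro c
    simp [he, Matrix.mulVec, dotProduct, Matrix.one_apply, Finset.sum_ite_eq,
      Finset.sum_const, Finset.card_univ, mul_comm]
  have htrJ : Matrix.trace J = (n:ℝ) := by
    simp [hJ, he, Matrix.trace, Matrix.vecMulVec, Matrix.diag, Finset.sum_const,
      Finset.card_univ]
  have hsmulJ : ∀ c : ℝ, e ⬝ᵥ ((c • J).mulVec e) = c * (n:ℝ)^2 := by
    intro c
    rw [Matrix.smul_mulVec, dotProduct_smul, heJe, smul_eq_mul]
  -- rank-1 nonincreasing for T
  have rank1 : ∀ A : symMat n, (A : Matrix (Fin n) (Fin n) ℝ).rank = 1 →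
      ((T A : symMat n) : Matrix (Fin n) (Fin n) ℝ).rank ≤ 1 := by
    intro A _
    rw [hT A]
    rcases eq_or_ne (Matrix.trace (A : Matrix (Fin n) (Fin n) ℝ)) 0 with h0 | h0
    · simp [h0]
    · calc (Matrix.trace (A : Matrix (Fin n) (Fin n) ℝ) • J).rank
          = (Matrix.vecMulVec (Matrix.trace (A : Matrix (Fin n) (Fin n) ℝ) • e) e).rank := by
            congr 1
            ext i j
            simp [hJ, Matrix.vecMulVec, mul_assoc]
        _ ≤ _ := by
            rw [Matrix.vecMulVec_eq (Fin 1)]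
            exact (Matrix.rank_mul_le_left _ _).trans
              ((Matrix.rank_le_card_width _).trans (by simp))
  refine ⟨rank1, ?_, ?_, ?_, ?_, ?_⟩
  · -- T ∘ Td ∘ T = T
    refine LinearMap.ext fun A => Subtype.ext ?_
    simp only [LinearMap.comp_apply]
    rw [hT, hTd, hT]
    rw [hsmulJ]
    rw [Matrix.trace_smul, Matrix.trace_one, Fintype.card_fin, smul_eq_mul]
    congr 1
    field_simp
  · -- Td ∘ T ∘ Td = Td
    refine LinearMap.ext fun A => Subtype.ext ?_
    simp only [LinearMap.comp_apply]
    rw [hTd, hT, hTd]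
    rw [Matrix.trace_smul, Matrix.trace_one, Fintype.card_fin, smul_eq_mul, hsmulJ]
    congr 1
    field_simp
  · -- symmetry of T ∘ Td
    intro A B
    rw [hT (Td A), hT (Td B), hTd A, hTd B]
    rw [Matrix.trace_smul, Matrix.trace_one, smul_eq_mul]
    rw [Matrix.trace_smul, Matrix.trace_one, smul_eq_mul]
    rw [Matrix.smul_mul, Matrix.mul_smul, Matrix.trace_smul, Matrix.trace_smul,
      smul_eq_mul, smul_eq_mul]
    have key : ∀ M : Matrix (Fin n) (Fin n) ℝ,
        Matrix.trace (J * M) = e ⬝ᵥ M.mulVec e ∧ Matrix.trace (M * J) = e ⬝ᵥ M.mulVec e := by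
      intro M
      constructor
      · simp [hJ, he, Matrix.trace, Matrix.diag, Matrix.mul_apply, Matrix.vecMulVec,
          Matrix.mulVec, dotProduct]
        exact Finset.sum_comm
      · simp [hJ, he, Matrix.trace, Matrix.diag, Matrix.mul_apply, Matrix.vecMulVec,
          Matrix.mulVec, dotProduct]
    rw [(key B).1, (key A).2]
    ring
  · -- symmetry of Td ∘ T
    intro A B
    rw [hTd (T A), hTd (T B), hT A, hT B, hsmulJ, hsmulJ]
    rw [Matrix.smul_mul, Matrix.mul_smul, Matrix.trace_smul, Matrix.trace_smul,
      smul_eq_mul, smul_eq_mul, Matrix.one_mul, Matrix.mul_one]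
    ring
  · -- Td is not rank-one nonincreasing
    intro hcon
    set A0 : Matrix (Fin n) (Fin n) ℝ := Matrix.diagonal (Pi.single 0 1) with hA0
    have hsym : A0.IsSymm := Matrix.isSymm_diagonal _
    have hrank : A0.rank = 1 := by
      rw [hA0, Matrix.rank_diagonal,
        Fintype.card_congr (Equiv.subtypeEquivRight (q := fun i => i = (0 : Fin n))
          (by intro i; simp [Pi.single_apply])),
        Fintype.card_subtype_eq (0 : Fin n)]
    have := hcon ⟨A0, hsym⟩ hrank
    rw [hTd] at this
    have heA0e : e ⬝ᵥ A0.mulVec e = 1 := by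
      simp [hA0, he, Matrix.mulVec_diagonal, dotProduct]
    rw [show ((⟨A0, hsym⟩ : symMat n) : Matrix (Fin n) (Fin n) ℝ) = A0 from rfl, heA0e] at this
    rw [Matrix.smul_one_eq_diagonal, Matrix.rank_diagonal] at this
    have hc : (1 / (n:ℝ)^3 * 1) ≠ 0 := by
      simp [hn0]
    rw [Fintype.card_congr (Equiv.subtypeUnivEquiv fun _ => hc), Fintype.card_fin] at this
    omega
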